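/- Let A₁, …, A_m ∈ ℝ^{d×d} be symmetric matrices and y₁, …, y_m ∈ ℝ. Suppose W* ∈ ℝ^{d×d} is positive semidefinite with ⟨A_i, W*⟩ = y_i for all i, and suppose there exists a sequence of vectors ν₁, ν₂, … ∈ ℝ^m such that for every n the matrix I − Σ_{i=1}^m (ν_n)_i·A_i is positive semidefinite, and tr((I − Σ_{i=1}^m (ν_n)_i·A_i)·W*) → 0 as n → ∞. Then W* has minimal nuclear norm among feasible positive semidefinite matrices: for every positive semidefinite W ∈ ℝ^{d×d} with ⟨A_i, W⟩ = y_i for all i, tr(W*) ≤ tr(W). -/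

import Mathlib

open Matrix Filter Topology

lemma trace_transpose_mul_self_nonneg {d : ℕ} (M : Matrix (Fin d) (Fin d) ℝ) :
    0 ≤ (Mᴴ * M).trace := by
  simp only [Matrix.trace, Matrix.diag, Matrix.mul_apply, Matrix.conjTranspose_apply,
    star_trivial]
  exact Finset.sum_nonneg fun i _ => Finset.sum_nonneg fun j _ => mul_self_nonneg _

lemma trace_mul_psd_nonneg {d : ℕ} {P Q : Matrix (Fin d) (Fin d) ℝ}
    (hP : P.PosSemidef) (hQ : Q.PosSemidef) : 0 ≤ (P * Q).trace := by
  obtain ⟨B, hB⟩ := (by classical open scoped MatrixOrder in exact CStarAlgebra.nonneg_iff_eq_star_mul_self.mp hP.nonneg : ∃ B : Matrix (Fin d) (Fin d) ℝ, _ = Bᴴ * B)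
  obtain ⟨C, hC⟩ := (by classical open scoped MatrixOrder in exact CStarAlgebra.nonneg_iff_eq_star_mul_self.mp hQ.nonneg : ∃ B : Matrix (Fin d) (Fin d) ℝ, _ = Bᴴ * B)
  have : (P * Q).trace = ((C * Bᴴ)ᴴ * (C * Bᴴ)).trace := by
    rw [hB, hC, Matrix.conjTranspose_mul, Matrix.conjTranspose_conjTranspose]
    rw [show Bᴴ * B * (Cᴴ * C) = Bᴴ * (B * Cᴴ * C) by noncomm_ring,
      Matrix.trace_mul_comm]
    noncomm_ring
  rw [this]
  exact trace_transpose_mul_self_nonneg _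

theorem stmt5 {d m : ℕ}
    (A : Fin m → Matrix (Fin d) (Fin d) ℝ) (y : Fin m → ℝ)
    (hA_symm : ∀ i, (A i).IsSymm)
    (Wstar : Matrix (Fin d) (Fin d) ℝ)
    (hW_psd : Wstar.PosSemidef)
    (hW_feas : ∀ i, ((A i)ᵀ * Wstar).trace = y i)
    (ν : ℕ → Fin m → ℝ)
    (hν_psd : ∀ n, ((1 : Matrix (Fin d) (Fin d) ℝ) - ∑ i, ν n i • A i).PosSemidef)
    (hν_lim : Tendsto
      (fun n => (((1 : Matrix (Fin d) (Fin d) ℝ) - ∑ i, ν n i • A i) * Wstar).trace)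
      atTop (nhds 0)) :
    ∀ W : Matrix (Fin d) (Fin d) ℝ, W.PosSemidef →
      (∀ i, ((A i)ᵀ * W).trace = y i) → Wstar.trace ≤ W.trace := by
  intro W hWpsd hWfeas
  -- key: for each n, tr(Wstar) - tr((I - Σν A) Wstar) = tr(W) - tr((I - Σν A) W)
  have key : ∀ n, Wstar.trace - (((1 : Matrix (Fin d) (Fin d) ℝ) - ∑ i, ν n i • A i) * Wstar).trace
      ≤ W.trace := by
    intro n
    have hAW : ((∑ i, ν n i • A i) * Wstar).trace = ((∑ i, ν n i • A i) * W).trace := by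
      simp only [Matrix.sum_mul, Matrix.trace_sum, Matrix.smul_mul, Matrix.trace_smul]
      refine Finset.sum_congr rfl fun i _ => ?_
      rw [show (A i) * Wstar = (A i)ᵀ * Wstar by rw [(hA_symm i).eq],
        show (A i) * W = (A i)ᵀ * W by rw [(hA_symm i).eq], hW_feas, hWfeas]
    have h1 : (((1 : Matrix (Fin d) (Fin d) ℝ) - ∑ i, ν n i • A i) * Wstar).trace
        = Wstar.trace - ((∑ i, ν n i • A i) * Wstar).trace := by
      rw [Matrix.sub_mul, Matrix.one_mul]; exact Matrix.trace_sub _ _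
    have h2 : (((1 : Matrix (Fin d) (Fin d) ℝ) - ∑ i, ν n i • A i) * W).trace
        = W.trace - ((∑ i, ν n i • A i) * W).trace := by
      rw [Matrix.sub_mul, Matrix.one_mul]; exact Matrix.trace_sub _ _
    have h3 : 0 ≤ (((1 : Matrix (Fin d) (Fin d) ℝ) - ∑ i, ν n i • A i) * W).trace :=
      trace_mul_psd_nonneg (hν_psd n) hWpsd
    rw [h1]
    linarith [h2, hAW]
  -- take limits
  have : Tendsto (fun n => Wstar.trace -
      (((1 : Matrix (Fin d) (Fin d) ℝ) - ∑ i, ν n i • A i) * Wstar).trace) atTop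
      (nhds (Wstar.trace - 0)) := tendsto_const_nhds.sub hν_lim
  rw [sub_zero] at this
  exact le_of_tendsto this (Filter.Eventually.of_forall key)
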